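/- Let N ≥ 1 be an integer and α ∈ [0,1]. Let A : {1,…,N} × {1,…,N} → {0,1} be any matrix satisfying A(i,i) = 1 for all i and A(i,j) + A(j,i) ≥ 1 for all i ≠ j. Define the strange set S(A) = { i : Σ_{j=1}^{N} A(i,j) ≤ Nα − 1 }. Then |S(A)| ≤ 2αN. -/

import Mathlib

open scoped Classical

/-- Deterministic counting lemma: in a 0/1 comparison matrix with ones on the
diagonal and `A i j + A j i ≥ 1` off the diagonal, the number of rows whose
row sum is at most `N*α - 1` is bounded by `2*α*N`. -/
theorem strange_set_card_le (N : ℕ) (hN : 1 ≤ N) (α : ℝ) (hα0 : 0 ≤ α) (hα1 : α ≤ 1)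
    (A : Fin N → Fin N → ℝ)
    (hA01 : ∀ i j, A i j = 0 ∨ A i j = 1)
    (hdiag : ∀ i, A i i = 1)
    (hpair : ∀ i j, i ≠ j → 1 ≤ A i j + A j i) :
    ((Finset.univ.filter (fun i : Fin N => ∑ j, A i j ≤ (N : ℝ) * α - 1)).card : ℝ)
      ≤ 2 * α * N := by
  set S := Finset.univ.filter (fun i : Fin N => ∑ j, A i j ≤ (N : ℝ) * α - 1) with hS
  have hApos : ∀ i j, 0 ≤ A i j := by
    intro i j; rcases hA01 i j with h | h <;> rw [h] <;> norm_num
  have hpair' : ∀ i j : Fin N, 1 ≤ A i j + A j i := by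
    intro i j
    by_cases h : i = j
    · subst h; rw [hdiag]; linarith [hApos i i]
    · exact hpair i j h
  have hrow : ∀ i ∈ S, ∑ j ∈ S, A i j ≤ (N : ℝ) * α - 1 := by
    intro i hi
    have hmem := (Finset.mem_filter.mp hi).2
    calc ∑ j ∈ S, A i j ≤ ∑ j, A i j := by
          apply Finset.sum_le_sum_of_subset_of_nonneg (Finset.subset_univ S)
          intro j _ _; exact hApos i j
      _ ≤ (N : ℝ) * α - 1 := hmem
  have h1 : ((S.card : ℝ)) * (S.card : ℝ) ≤ ∑ i ∈ S, ∑ j ∈ S, (A i j + A j i) := by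
    calc ((S.card : ℝ)) * (S.card : ℝ)
        = ∑ _i ∈ S, ∑ _j ∈ S, (1 : ℝ) := by simp [mul_comm]
      _ ≤ ∑ i ∈ S, ∑ j ∈ S, (A i j + A j i) := by
          apply Finset.sum_le_sum; intro i _
          apply Finset.sum_le_sum; intro j _
          exact hpair' i j
  have h2 : ∑ i ∈ S, ∑ j ∈ S, (A i j + A j i) = 2 * ∑ i ∈ S, ∑ j ∈ S, A i j := by
    simp_rw [Finset.sum_add_distrib]
    rw [show ∑ i ∈ S, ∑ j ∈ S, A j i = ∑ i ∈ S, ∑ j ∈ S, A i j from Finset.sum_comm]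
    ring
  have h3 : ∑ i ∈ S, ∑ j ∈ S, A i j ≤ (S.card : ℝ) * ((N : ℝ) * α) := by
    calc ∑ i ∈ S, ∑ j ∈ S, A i j ≤ ∑ _i ∈ S, ((N : ℝ) * α - 1) :=
          Finset.sum_le_sum hrow
      _ = (S.card : ℝ) * ((N : ℝ) * α - 1) := by simp [mul_comm]; ring
      _ ≤ (S.card : ℝ) * ((N : ℝ) * α) := by
          apply mul_le_mul_of_nonneg_left (by linarith) (Nat.cast_nonneg _)
  by_cases hc : S.card = 0
  · rw [hc]; push_cast
    positivity
  · have hcpos : (0 : ℝ) < S.card := by positivity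
    have : (S.card : ℝ) * (S.card : ℝ) ≤ 2 * ((S.card : ℝ) * ((N : ℝ) * α)) := by
      rw [h2] at h1; linarith
    have := le_of_mul_le_mul_left (by linarith [this] : (S.card:ℝ) * (S.card:ℝ) ≤ (S.card:ℝ) * (2 * ((N:ℝ)*α))) hcpos
    linarith
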